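/- Let G = (V,E) be a finite connected graph, i₀ ∈ V, and c ∈ ℝ. Define the dynamics B_{i,t} by: B_{i₀,t} = c for all t, B_{i,0} arbitrary for i ≠ i₀, and for t > 0 and i ≠ i₀, B_{i,t} = (1/|N_i|) ∑_{j ∈ N_i} B_{j,t-1}. Then for every i ∈ V, lim_{t→∞} B_{i,t} = c. -/

import Mathlib

theorem stmt_14 {V : Type*} [Fintype V] [DecidableEq V] [Nonempty V]
    (G : SimpleGraph V) [DecidableRel G.Adj] (hconn : G.Connected)
    (i₀ : V) (c : ℝ) (B : ℕ → V → ℝ)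
    (hbot : ∀ t : ℕ, B t i₀ = c)
    (hupd : ∀ t : ℕ, ∀ i : V, i ≠ i₀ →
      B (t + 1) i = (∑ j ∈ G.neighborFinset i, B t j) / (G.degree i)) :
    ∀ i : V, Filter.Tendsto (fun t : ℕ => B t i) Filter.atTop (nhds c) := by
  classical
  set n := Fintype.card V with hn
  have hn0 : 0 < n := Fintype.card_pos
  set δ : ℝ := (n : ℝ)⁻¹ with hδ
  have hδ0 : 0 < δ := by positivity
  have hδ1 : δ ≤ 1 := by
    rw [hδ]
    have h1n : (1:ℝ) ≤ (n:ℝ) := by exact_mod_cast hn0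
    exact inv_le_one_of_one_le₀ h1n
  set M : ℕ → ℝ := fun t => Finset.univ.sup' Finset.univ_nonempty (fun i => |B t i - c|)
    with hM
  have hM_ge : ∀ t i, |B t i - c| ≤ M t := by
    intro t i
    simp only [hM]
    exact Finset.le_sup' (fun j => |B t j - c|) (Finset.mem_univ i)
  have hM0 : ∀ t, 0 ≤ M t := fun t => le_trans (abs_nonneg _) (hM_ge t i₀)
  -- degree facts
  have hdeg : ∀ i : V, i ≠ i₀ → 0 < G.degree i := by
    intro i hi
    rw [G.degree_pos_iff_exists_adj]
    have hd : G.dist i i₀ ≠ 0 := by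
      rw [SimpleGraph.dist_ne_zero_iff_ne_and_reachable]
      exact ⟨hi, hconn i i₀⟩
    obtain ⟨p, hp⟩ := SimpleGraph.exists_walk_of_dist_ne_zero hd
    have hl : 0 < p.length := by omega
    have := p.adj_getVert_succ hl
    rw [p.getVert_zero] at this
    exact ⟨_, this⟩
  -- key averaging bound
  have havg : ∀ (t : ℕ) (i : V), i ≠ i₀ → ∀ (C a : ℝ), 0 ≤ a → 0 ≤ C →
      (∀ j, |B t j - c| ≤ C) →
      (∃ j₀ ∈ G.neighborFinset i, |B t j₀ - c| ≤ C - a) →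
      |B (t+1) i - c| ≤ C - a / G.degree i := by
    intro t i hi C a ha hC hall ⟨j₀, hj₀mem, hj₀⟩
    have hd := hdeg i hi
    have hdR : (0 : ℝ) < G.degree i := by exact_mod_cast hd
    rw [hupd t i hi]
    have hcard : (G.neighborFinset i).card = G.degree i := rfl
    have heq : (∑ j ∈ G.neighborFinset i, B t j) / (G.degree i) - c
        = (∑ j ∈ G.neighborFinset i, (B t j - c)) / (G.degree i) := by
      rw [Finset.sum_sub_distrib, Finset.sum_const, hcard, sub_div]
      field_simp
      rw [nsmul_eq_mul]
    rw [heq]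
    rw [abs_div, abs_of_pos hdR, div_le_iff₀ hdR]
    calc |∑ j ∈ G.neighborFinset i, (B t j - c)|
        ≤ ∑ j ∈ G.neighborFinset i, |B t j - c| := Finset.abs_sum_le_sum_abs _ _
      _ = |B t j₀ - c| + ∑ j ∈ (G.neighborFinset i).erase j₀, |B t j - c| :=
          (Finset.add_sum_erase _ _ hj₀mem).symm
      _ ≤ (C - a) + ((G.degree i : ℝ) - 1) * C := by
          gcongr
          calc ∑ j ∈ (G.neighborFinset i).erase j₀, |B t j - c|
              ≤ ∑ _j ∈ (G.neighborFinset i).erase j₀, C :=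
                Finset.sum_le_sum fun j _ => hall j
            _ = ((G.degree i : ℝ) - 1) * C := by
                rw [Finset.sum_const, Finset.card_erase_of_mem hj₀mem, hcard, nsmul_eq_mul]
                have : (1 : ℕ) ≤ G.degree i := hd
                push_cast [Nat.cast_sub this]
                ring
      _ = (C - a / (G.degree i)) * (G.degree i) := by field_simp; ring
  -- monotonicity of M
  have hMone : ∀ t, M (t+1) ≤ M t := by
    intro t
    apply Finset.sup'_le
    intro i _
    by_cases hi : i = i₀
    · subst hi; rw [hbot]; simpa using hM0 t
    · obtain ⟨w, hw⟩ := (G.degree_pos_iff_exists_adj i).mp (hdeg i hi)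
      have := havg t i hi (M t) 0 le_rfl (hM0 t) (hM_ge t)
        ⟨w, (G.mem_neighborFinset i w).mpr hw, by simpa using hM_ge t w⟩
      simpa using this
  have hMant : ∀ s t, s ≤ t → M t ≤ M s := by
    intro s t h
    induction t with
    | zero => simp_all
    | succ t ih =>
      rcases Nat.lt_or_ge s (t+1) with h' | h'
      · exact (hMone t).trans (ih (by omega))
      · have : s = t + 1 := by omega
        subst this; exact le_rfl
  -- main contraction lemma
  have key : ∀ k : ℕ, ∀ s t : ℕ, ∀ i : V, G.dist i₀ i ≤ k → s + k ≤ t →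
      |B t i - c| ≤ (1 - δ^k) * M s := by
    intro k
    induction k with
    | zero =>
      intro s t i hdist hts
      have : i₀ = i := (hconn.dist_eq_zero_iff).mp (by omega)
      subst this
      rw [hbot]
      simp
    | succ k IH =>
      intro s t i hdist hts
      by_cases hk : G.dist i₀ i ≤ k
      · calc |B t i - c| ≤ (1 - δ^k) * M s := IH s t i hk (by omega)
          _ ≤ (1 - δ^(k+1)) * M s := by
            apply mul_le_mul_of_nonneg_right _ (hM0 s)
            have : δ^(k+1) ≤ δ^k := pow_le_pow_of_le_one hδ0.le hδ1 (by omega)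
            linarith
      · have hdk : G.dist i₀ i = k + 1 := by omega
        have hi : i ≠ i₀ := by
          intro h; subst h; rw [SimpleGraph.dist_self] at hdk; omega
        have hr : G.dist i₀ i ≠ 0 := by omega
        obtain ⟨p, hp⟩ := SimpleGraph.exists_walk_of_dist_ne_zero hr
        rw [hdk] at hp
        have hgv : ∀ m, G.dist i₀ (p.getVert m) ≤ m := by
          intro m
          induction m with
          | zero => simp [p.getVert_zero, SimpleGraph.dist_self]
          | succ m ihm =>
            rcases le_or_gt p.length m with h | h
            · rw [p.getVert_of_length_le h] at ihm
              rw [p.getVert_of_length_le (h.trans (Nat.le_succ m))]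
              omega
            · have hadj := p.adj_getVert_succ h
              calc G.dist i₀ (p.getVert (m+1))
                  ≤ G.dist i₀ (p.getVert m) + G.dist (p.getVert m) (p.getVert (m+1)) :=
                    hconn.dist_triangle
                _ ≤ m + 1 := by
                    rw [SimpleGraph.dist_eq_one_iff_adj.mpr hadj]; omega
        set j₀ := p.getVert k with hj₀
        have hadj : G.Adj j₀ i := by
          have h1 : k < p.length := by omega
          have h2 := p.adj_getVert_succ h1
          have h3 : p.getVert (k+1) = i := by
            have := p.getVert_length
            rw [hp] at this
            exact this
          rwa [h3] at h2
        have hdj : G.dist i₀ j₀ ≤ k := hgv k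
        obtain ⟨u, rfl⟩ : ∃ u, t = u + 1 := ⟨t - 1, by omega⟩
        have hju : |B u j₀ - c| ≤ M s - δ^k * M s := by
          have := IH s u j₀ hdj (by omega)
          nlinarith [hM0 s]
        have hall : ∀ j, |B u j - c| ≤ M s :=
          fun j => (hM_ge u j).trans (hMant s u (by omega))
        have hb := havg u i hi (M s) (δ^k * M s)
          (mul_nonneg (pow_nonneg hδ0.le k) (hM0 s)) (hM0 s) hall
          ⟨j₀, (G.mem_neighborFinset i j₀).mpr hadj.symm, hju⟩
        have hdR : (0 : ℝ) < G.degree i := by exact_mod_cast hdeg i hi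
        have hdn : (G.degree i : ℝ) ≤ n := by
          exact_mod_cast (G.degree_lt_card_verts i).le
        have hstep : δ^(k+1) * M s ≤ δ^k * M s / G.degree i := by
          rw [pow_succ, div_eq_mul_inv]
          have h1 : δ ≤ ((G.degree i : ℝ))⁻¹ := by
            rw [hδ]
            exact inv_anti₀ hdR hdn
          have h2 : 0 ≤ δ^k * M s := mul_nonneg (pow_nonneg hδ0.le k) (hM0 s)
          calc δ^k * δ * M s = δ^k * M s * δ := by ring
            _ ≤ δ^k * M s * ((G.degree i : ℝ))⁻¹ := by gcongr
        nlinarith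
  -- distance bound
  have hdistn : ∀ i : V, G.dist i₀ i ≤ n := by
    intro i
    obtain ⟨p, hp, hl⟩ := hconn.exists_path_of_dist i₀ i
    rw [← hl]
    exact hp.length_lt.le
  set q : ℝ := 1 - δ^n with hq
  have hq0 : 0 ≤ q := by
    have : δ^n ≤ 1 := pow_le_one₀ hδ0.le hδ1
    rw [hq]; linarith
  have hq1 : q < 1 := by
    have : 0 < δ^n := pow_pos hδ0 n
    rw [hq]; linarith
  have hcontr : ∀ s, M (s + n) ≤ q * M s := by
    intro s
    apply Finset.sup'_le
    intro i _
    exact key n s (s + n) i (hdistn i) le_rfl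
  have hMn : ∀ m, M (m * n) ≤ q^m * M 0 := by
    intro m
    induction m with
    | zero => simp
    | succ m ih =>
      have : (m + 1) * n = m * n + n := by ring
      rw [this]
      calc M (m * n + n) ≤ q * M (m * n) := hcontr (m * n)
        _ ≤ q * (q^m * M 0) := by gcongr
        _ = q^(m+1) * M 0 := by ring
  -- conclude
  intro i
  have habs : Filter.Tendsto (fun t => |B t i - c|) Filter.atTop (nhds 0) := by
    apply squeeze_zero (fun t => abs_nonneg _) (g := fun t => q^(t / n) * M 0)
    · intro t
      calc |B t i - c| ≤ M t := hM_ge t i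
        _ ≤ M ((t / n) * n) := hMant _ _ (Nat.div_mul_le_self t n)
        _ ≤ q^(t / n) * M 0 := hMn (t / n)
    · have hdiv : Filter.Tendsto (fun t : ℕ => t / n) Filter.atTop Filter.atTop := by
        apply Filter.tendsto_atTop_atTop.mpr
        intro b
        exact ⟨b * n, fun a ha => (Nat.le_div_iff_mul_le hn0).mpr ha⟩
      have := ((tendsto_pow_atTop_nhds_zero_of_lt_one hq0 hq1).comp hdiv).mul_const (M 0)
      simpa using this
  have h0 : Filter.Tendsto (fun t => B t i - c) Filter.atTop (nhds 0) :=
    (tendsto_zero_iff_abs_tendsto_zero _).mpr habs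
  have := h0.add_const c
  simpa using this
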